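/- Let X be a Banach space, and let g be a continuous, weak*-lower semicontinuous, positively quadratic homogeneous, coercive convex function on X* with f its Fenchel pre-conjugate on X (i.e., F(f) = g, f continuous positively quadratic homogeneous coercive convex). If g is strictly convex, then f is Gâteaux differentiable at every point of X. -/

import Mathlib

open Set Filter Metric Topology

/-- Gâteaux differentiability of a real-valued function at a point. -/
def GateauxDifferentiableAt {E : Type*} [NormedAddCommGroup E] [NormedSpace ℝ E]
    (f : E → ℝ) (x : E) : Prop :=
  ∃ φ : E →L[ℝ] ℝ, ∀ y : E,
    Tendsto (fun t : ℝ => (f (x + t • y) - f x) / t) (𝓝[≠] (0 : ℝ)) (𝓝 (φ y))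

section Aux

variable {X : Type*} [NormedAddCommGroup X] [NormedSpace ℝ X]

/-- Difference quotient of `f` at `x` in direction `y`. -/
noncomputable def dirQ (f : X → ℝ) (x y : X) (t : ℝ) : ℝ := (f (x + t • y) - f x) / t

/-- Lower directional derivative (inf of difference quotients over positive `t`). -/
noncomputable def dirD (f : X → ℝ) (x y : X) : ℝ := sInf (dirQ f x y '' Ioi 0)

lemma line_convex (f : X → ℝ) (hf : ConvexOn ℝ univ f) (x y : X) :
    ConvexOn ℝ univ (fun t : ℝ => f (x + t • y)) := by
  refine ⟨convex_univ, fun s _ t _ a b ha hb hab => ?_⟩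
  have h1 : x + (a • s + b • t) • y = a • (x + s • y) + b • (x + t • y) := by
    have : a • (x + s • y) + b • (x + t • y) = (a + b) • x + (a * s + b * t) • y := by
      module
    rw [this, hab, one_smul, smul_eq_mul, smul_eq_mul]
  simp only []
  rw [h1]
  simpa using hf.2 (mem_univ (x + s • y)) (mem_univ (x + t • y)) ha hb hab

lemma dirQ_mono (f : X → ℝ) (hf : ConvexOn ℝ univ f) (x y : X) {s t : ℝ}
    (hs : s ≠ 0) (ht : t ≠ 0) (hst : s ≤ t) : dirQ f x y s ≤ dirQ f x y t := by
  have hc := (line_convex f hf x y).secant_mono (a := (0:ℝ)) (mem_univ _) (mem_univ _)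
    (mem_univ _) hs ht hst
  simpa [dirQ, sub_zero] using hc

lemma dirQ_neg (f : X → ℝ) (x y : X) (t : ℝ) :
    dirQ f x y t = - dirQ f x (-y) (-t) := by
  have : x + t • y = x + (-t) • (-y) := by module
  rw [dirQ, dirQ, this, div_neg, neg_neg]

lemma dirQ_nonempty (f : X → ℝ) (x y : X) : (dirQ f x y '' Ioi 0).Nonempty :=
  ⟨dirQ f x y 1, ⟨1, by norm_num, rfl⟩⟩

lemma dirQ_bddBelow (f : X → ℝ) (hf : ConvexOn ℝ univ f) (x y : X) :
    BddBelow (dirQ f x y '' Ioi 0) := by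
  refine ⟨dirQ f x y (-1), ?_⟩
  rintro r ⟨t, ht, rfl⟩
  exact dirQ_mono f hf x y (by norm_num) (ne_of_gt ht) (by linarith [mem_Ioi.mp ht])

lemma dirD_le_dirQ (f : X → ℝ) (hf : ConvexOn ℝ univ f) (x y : X) {t : ℝ} (ht : 0 < t) :
    dirD f x y ≤ dirQ f x y t :=
  csInf_le (dirQ_bddBelow f hf x y) ⟨t, ht, rfl⟩

lemma dirD_exists_lt (f : X → ℝ) (x y : X) {ε : ℝ} (hε : 0 < ε) :
    ∃ t : ℝ, 0 < t ∧ dirQ f x y t < dirD f x y + ε := by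
  obtain ⟨r, ⟨t, ht, rfl⟩, hlt⟩ := exists_lt_of_csInf_lt (dirQ_nonempty f x y)
    (show dirD f x y < dirD f x y + ε by linarith)
  exact ⟨t, ht, hlt⟩

lemma dirD_zero (f : X → ℝ) (x : X) : dirD f x 0 = 0 := by
  have : dirQ f x 0 '' Ioi 0 = {0} := by
    ext r
    constructor
    · rintro ⟨t, ht, rfl⟩
      simp [dirQ, smul_zero]
    · rintro rfl
      exact ⟨1, by norm_num, by simp [dirQ, smul_zero]⟩
  rw [dirD, this, csInf_singleton]

lemma dirQ_smul (f : X → ℝ) (x y : X) {c : ℝ} (hc : 0 < c) {t : ℝ} (ht : t ≠ 0) :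
    dirQ f x (c • y) t = c * dirQ f x y (c * t) := by
  have h1 : x + t • c • y = x + (c * t) • y := by module
  rw [dirQ, dirQ, h1]
  field_simp

lemma dirD_smul (f : X → ℝ) (hf : ConvexOn ℝ univ f) (x y : X) {c : ℝ} (hc : 0 < c) :
    dirD f x (c • y) = c * dirD f x y := by
  have key : ∀ (c : ℝ), 0 < c → ∀ y : X, dirD f x (c • y) ≤ c * dirD f x y := by
    intro c hc y
    refine le_of_forall_pos_le_add fun ε hε => ?_
    obtain ⟨t, ht, hlt⟩ := dirD_exists_lt f x y (show 0 < ε / c by positivity)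
    have h2 : dirD f x (c • y) ≤ dirQ f x (c • y) (t / c) :=
      dirD_le_dirQ f hf x _ (by positivity)
    rw [dirQ_smul f x y hc (by positivity), mul_div_cancel₀ _ (ne_of_gt hc)] at h2
    calc dirD f x (c • y) ≤ c * dirQ f x y t := h2
      _ ≤ c * (dirD f x y + ε / c) := mul_le_mul_of_nonneg_left hlt.le hc.le
      _ = c * dirD f x y + ε := by field_simp
  refine le_antisymm (key c hc y) ?_
  have h2 := key c⁻¹ (by positivity) (c • y)
  rw [inv_smul_smul₀ (ne_of_gt hc)] at h2
  have := mul_le_mul_of_nonneg_left h2 (le_of_lt hc)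
  rw [← mul_assoc, mul_inv_cancel₀ (ne_of_gt hc), one_mul] at this
  exact this

lemma dirQ_add (f : X → ℝ) (hf : ConvexOn ℝ univ f) (x y z : X) {t : ℝ} (ht : 0 < t) :
    dirQ f x (y + z) t ≤ dirQ f x y (2 * t) + dirQ f x z (2 * t) := by
  have h1 : x + t • (y + z) = (2⁻¹ : ℝ) • (x + (2*t) • y) + (2⁻¹ : ℝ) • (x + (2*t) • z) := by
    module
  have h2 : f (x + t • (y + z)) ≤ 2⁻¹ * f (x + (2*t) • y) + 2⁻¹ * f (x + (2*t) • z) := by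
    rw [h1]
    have := hf.2 (mem_univ (x + (2*t) • y)) (mem_univ (x + (2*t) • z))
      (by norm_num : (0:ℝ) ≤ 2⁻¹) (by norm_num : (0:ℝ) ≤ 2⁻¹) (by norm_num : (2⁻¹:ℝ) + 2⁻¹ = 1)
    simpa using this
  rw [dirQ, dirQ, dirQ, ← add_div, div_le_div_iff₀ ht (by linarith)]
  nlinarith

lemma dirD_add (f : X → ℝ) (hf : ConvexOn ℝ univ f) (x y z : X) :
    dirD f x (y + z) ≤ dirD f x y + dirD f x z := by
  refine le_of_forall_pos_le_add fun ε hε => ?_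
  obtain ⟨t₁, ht₁, h1⟩ := dirD_exists_lt f x y (show 0 < ε/2 by positivity)
  obtain ⟨t₂, ht₂, h2⟩ := dirD_exists_lt f x z (show 0 < ε/2 by positivity)
  set t := min t₁ t₂ / 2 with htdef
  have ht : 0 < t := by positivity
  have h2t₁ : 2 * t ≤ t₁ := by
    simp only [htdef]; rw [mul_div_cancel₀]; exact min_le_left _ _; norm_num
  have h2t₂ : 2 * t ≤ t₂ := by
    simp only [htdef]; rw [mul_div_cancel₀]; exact min_le_right _ _; norm_num
  calc dirD f x (y + z) ≤ dirQ f x (y + z) t := dirD_le_dirQ f hf x _ ht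
    _ ≤ dirQ f x y (2*t) + dirQ f x z (2*t) := dirQ_add f hf x y z ht
    _ ≤ dirQ f x y t₁ + dirQ f x z t₂ := by
        gcongr <;> exact dirQ_mono f hf x _ (by positivity) (by positivity) (by assumption)
    _ ≤ dirD f x y + dirD f x z + ε := by linarith

lemma dirD_neg_le (f : X → ℝ) (hf : ConvexOn ℝ univ f) (x y : X) :
    - dirD f x y ≤ dirD f x (-y) := by
  have h := dirD_add f hf x y (-y)
  rw [add_neg_cancel, dirD_zero] at h
  linarith

lemma dirD_smul_le (f : X → ℝ) (hf : ConvexOn ℝ univ f) (x y : X) (c : ℝ) :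
    c * dirD f x y ≤ dirD f x (c • y) := by
  rcases lt_trichotomy c 0 with hc | rfl | hc
  · have h1 : c • y = (-c) • (-y) := by module
    rw [h1, dirD_smul f hf x (-y) (by linarith : (0:ℝ) < -c)]
    have := dirD_neg_le f hf x y
    nlinarith
  · rw [zero_smul, dirD_zero, zero_mul]
  · rw [dirD_smul f hf x y hc]

lemma exists_subgradient (f : X → ℝ) (hf : ConvexOn ℝ univ f) (hfc : Continuous f)
    (x : X) {y : X} (hy : y ≠ 0) :
    ∃ φ : X →L[ℝ] ℝ, (∀ z, φ z ≤ f (x + z) - f x) ∧ φ y = dirD f x y := by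
  -- Hahn-Banach extension of `t • y ↦ t * dirD f x y` dominated by `dirD f x`
  have hdom : ∀ v : (LinearPMap.mkSpanSingleton (K := ℝ) (σ := RingHom.id ℝ) y (dirD f x y) hy).domain,
      LinearPMap.mkSpanSingleton (K := ℝ) (σ := RingHom.id ℝ) y (dirD f x y) hy v ≤ dirD f x v := by
    rintro ⟨v, hv⟩
    obtain ⟨c, rfl⟩ := Submodule.mem_span_singleton.mp hv
    rw [LinearPMap.mkSpanSingleton'_apply, smul_eq_mul]
    exact dirD_smul_le f hf x y c
  obtain ⟨L, hL1, hL2⟩ := exists_extension_of_le_sublinear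
    (LinearPMap.mkSpanSingleton y (dirD f x y) hy) (dirD f x)
    (fun c hc z => dirD_smul f hf x z hc)
    (fun y z => dirD_add f hf x y z) hdom
  have hLy : L y = dirD f x y := by
    have := hL1 ⟨y, Submodule.mem_span_singleton_self y⟩
    rwa [LinearPMap.mkSpanSingleton_apply] at this
  -- the linear map is a subgradient
  have hsub : ∀ z, L z ≤ f (x + z) - f x := fun z => by
    have h1 : dirD f x z ≤ dirQ f x z 1 := dirD_le_dirQ f hf x z one_pos
    have h2 : dirQ f x z 1 = f (x + z) - f x := by rw [dirQ, one_smul, div_one]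
    linarith [hL2 z]
  -- continuity from continuity of `f` at `x`
  obtain ⟨δ, hδ, hδ1⟩ := Metric.continuousAt_iff.mp (hfc.continuousAt (x := x)) 1 one_pos
  have hbound : ∀ z, |L z| ≤ (2 / δ) * ‖z‖ := by
    have key : ∀ w : X, ‖w‖ < δ → L w ≤ 1 := by
      intro w hw
      have hd : dist (x + w) x < δ := by
        rw [dist_eq_norm, add_sub_cancel_left]; exact hw
      have := abs_lt.mp ((Real.dist_eq _ _) ▸ hδ1 hd)
      linarith [hsub w]
    intro z
    rcases eq_or_ne z 0 with rfl | hz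
    · simp
    have hz' : 0 < ‖z‖ := norm_pos_iff.mpr hz
    have hw : ‖(δ / (2 * ‖z‖)) • z‖ < δ := by
      rw [norm_smul, Real.norm_eq_abs, abs_of_pos (by positivity)]
      rw [div_mul_eq_mul_div, div_lt_iff₀ (by positivity)]
      nlinarith
    have h1 : L ((δ / (2 * ‖z‖)) • z) ≤ 1 := key _ hw
    have h2 : L (-((δ / (2 * ‖z‖)) • z)) ≤ 1 := key _ (by rwa [norm_neg])
    rw [map_smul, smul_eq_mul] at h1
    rw [map_neg, map_smul, smul_eq_mul] at h2
    have ha : (0:ℝ) < δ / (2 * ‖z‖) := by positivity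
    have key2 : ∀ r : ℝ, δ / (2 * ‖z‖) * r ≤ 1 → r ≤ 2 / δ * ‖z‖ := by
      intro r h
      rw [← le_div_iff₀' ha] at h
      calc r ≤ 1 / (δ / (2 * ‖z‖)) := h
        _ = 2 / δ * ‖z‖ := by field_simp
    rw [abs_le]
    refine ⟨?_, key2 _ h1⟩
    have h3 := key2 (-L z) (by rw [mul_neg]; linarith)
    linarith
  refine ⟨LinearMap.mkContinuous L (2/δ) fun z => by simpa using hbound z, hsub, hLy⟩

lemma tendsto_dirQ (f : X → ℝ) (hf : ConvexOn ℝ univ f) (x y : X) (φ : X →L[ℝ] ℝ)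
    (h1 : φ y = dirD f x y) (h2 : φ (-y) = dirD f x (-y)) :
    Tendsto (fun t : ℝ => (f (x + t • y) - f x) / t) (𝓝[≠] (0 : ℝ)) (𝓝 (φ y)) := by
  rw [Metric.tendsto_nhdsWithin_nhds]
  intro ε hε
  obtain ⟨t₁, ht₁, hq₁⟩ := dirD_exists_lt f x y hε
  obtain ⟨t₂, ht₂, hq₂⟩ := dirD_exists_lt f x (-y) hε
  refine ⟨min t₁ t₂, lt_min ht₁ ht₂, fun t htne hdist => ?_⟩
  rw [Real.dist_eq, sub_zero] at hdist
  rw [Real.dist_eq]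
  have htne' : t ≠ 0 := htne
  have hφneg : φ (-y) = - φ y := by rw [map_neg]
  rcases lt_or_gt_of_ne htne' with hneg | hpos
  · -- t < 0
    have habs : -t < min t₁ t₂ := by
      rw [abs_of_neg hneg] at hdist; exact hdist
    have e1 : (f (x + t • y) - f x) / t = - dirQ f x (-y) (-t) := dirQ_neg f x y t
    have e2 : dirD f x (-y) ≤ dirQ f x (-y) (-t) := dirD_le_dirQ f hf x _ (by linarith)
    have e3 : dirQ f x (-y) (-t) ≤ dirQ f x (-y) t₂ :=
      dirQ_mono f hf x (-y) (by linarith) (ne_of_gt ht₂)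
        (by linarith [min_le_right t₁ t₂])
    rw [e1, h1]
    have hd : dirD f x (-y) = - dirD f x y := by rw [← h2, hφneg, h1]
    rw [abs_lt]
    constructor <;> [skip; skip] <;> nlinarith [e2, e3, hq₂, hd]
  · -- t > 0
    have habs : t < min t₁ t₂ := by rw [abs_of_pos hpos] at hdist; exact hdist
    have e2 : dirD f x y ≤ dirQ f x y t := dirD_le_dirQ f hf x _ hpos
    have e3 : dirQ f x y t ≤ dirQ f x y t₁ :=
      dirQ_mono f hf x y (ne_of_gt hpos) (ne_of_gt ht₁) (by linarith [min_le_left t₁ t₂])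
    have e4 : (f (x + t • y) - f x) / t = dirQ f x y t := rfl
    rw [e4, h1, abs_lt]
    constructor <;> linarith


theorem gateaux_differentiable_of_dual_strictly_convex'
    {X : Type*} [NormedAddCommGroup X] [NormedSpace ℝ X] [CompleteSpace X]
    (g : (X →L[ℝ] ℝ) → ℝ) (f : X → ℝ)
    (hfcont : Continuous f)
    (hfconv : ConvexOn ℝ univ f)
    (hconj : ∀ φ : X →L[ℝ] ℝ, (⨆ x : X, (φ x - f x)) = g φ)
    (hstrict : StrictConvexOn ℝ univ g) :
    ∀ x : X, GateauxDifferentiableAt f x := by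
  intro x
  -- any subgradient ψ at x satisfies g ψ = ψ x - f x
  have hval : ∀ ψ : X →L[ℝ] ℝ, (∀ z, ψ z ≤ f (x + z) - f x) → g ψ = ψ x - f x := by
    intro ψ hψ
    have hb : ∀ w, ψ w - f w ≤ ψ x - f x := by
      intro w
      have h1 := hψ (w - x)
      have h2 : x + (w - x) = w := by abel
      rw [h2, map_sub] at h1
      linarith
    rw [← hconj ψ]
    refine le_antisymm (ciSup_le hb) ?_
    have : ψ x - f x ≤ ⨆ w : X, (ψ w - f w) :=
      le_ciSup ⟨ψ x - f x, by rintro r ⟨w, rfl⟩; exact hb w⟩ x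
    exact this
  -- uniqueness of subgradients at x, from strict convexity of g
  have huniq : ∀ ψ₁ ψ₂ : X →L[ℝ] ℝ, (∀ z, ψ₁ z ≤ f (x + z) - f x) →
      (∀ z, ψ₂ z ≤ f (x + z) - f x) → ψ₁ = ψ₂ := by
    intro ψ₁ ψ₂ h1 h2
    by_contra hne
    set m : X →L[ℝ] ℝ := (2⁻¹ : ℝ) • ψ₁ + (2⁻¹ : ℝ) • ψ₂ with hm
    have hmsub : ∀ z, m z ≤ f (x + z) - f x := by
      intro z
      have : m z = 2⁻¹ * ψ₁ z + 2⁻¹ * ψ₂ z := by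
        simp [hm]
      rw [this]
      linarith [h1 z, h2 z]
    have hlt := hstrict.2 (mem_univ ψ₁) (mem_univ ψ₂) hne
      (by norm_num : (0:ℝ) < 2⁻¹) (by norm_num : (0:ℝ) < 2⁻¹) (by norm_num)
    rw [hval _ h1, hval _ h2, hval _ hmsub] at hlt
    have hmx : m x = 2⁻¹ * ψ₁ x + 2⁻¹ * ψ₂ x := by simp [hm]
    rw [hmx, smul_eq_mul, smul_eq_mul] at hlt
    linarith
  by_cases hX : ∀ y : X, y = 0
  · refine ⟨0, fun y => ?_⟩
    rw [hX y]
    have : (fun t : ℝ => (f (x + t • (0:X)) - f x) / t) = fun _ => 0 := by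
      funext t; simp
    rw [this]
    simpa using tendsto_const_nhds
  · push_neg at hX
    obtain ⟨y₀, hy₀⟩ := hX
    obtain ⟨φ, hφsub, hφy₀⟩ := exists_subgradient f hfconv hfcont x hy₀
    have hφ : ∀ y : X, φ y = dirD f x y := by
      intro y
      rcases eq_or_ne y 0 with rfl | hy
      · rw [map_zero, dirD_zero]
      · obtain ⟨ψ, hψsub, hψy⟩ := exists_subgradient f hfconv hfcont x hy
        rw [huniq φ ψ hφsub hψsub]
        exact hψy
    exact ⟨φ, fun y => tendsto_dirQ f hfconv x y φ (hφ y) (hφ (-y))⟩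

end Aux

/-- Let `g` be a continuous, weak*-lower semicontinuous, positively
quadratic homogeneous, coercive convex function on `X*`, and let `f` be the continuous
positively quadratic homogeneous coercive convex function on `X` with Fenchel conjugate
`g`. If `g` is strictly convex, then `f` is Gâteaux differentiable everywhere. -/
theorem gateaux_differentiable_of_dual_strictly_convex
    {X : Type*} [NormedAddCommGroup X] [NormedSpace ℝ X] [CompleteSpace X]
    (g : (X →L[ℝ] ℝ) → ℝ) (f : X → ℝ)
    (hgcont : Continuous g)
    (hgcoer : Tendsto g (Bornology.cobounded (X →L[ℝ] ℝ)) atTop)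
    (hghom : ∀ k : ℝ, 0 ≤ k → ∀ φ, g (k • φ) = k ^ 2 * g φ)
    (hgconv : ConvexOn ℝ univ g)
    (hglsc : LowerSemicontinuous
      (fun ψ : WeakDual ℝ X => g (StrongDual.toWeakDual.symm ψ)))
    (hfcont : Continuous f)
    (hfcoer : Tendsto f (Bornology.cobounded X) atTop)
    (hfhom : ∀ k : ℝ, 0 ≤ k → ∀ x, f (k • x) = k ^ 2 * f x)
    (hfconv : ConvexOn ℝ univ f)
    (hconj : ∀ φ : X →L[ℝ] ℝ, (⨆ x : X, (φ x - f x)) = g φ)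
    (hstrict : StrictConvexOn ℝ univ g) :
    ∀ x : X, GateauxDifferentiableAt f x :=
  gateaux_differentiable_of_dual_strictly_convex' g f hfcont hfconv hconj hstrict
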